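/- Let n ≥ 1, let 𝒜 be a subalgebra of the ℝ-algebra ℍ, and let p q : ℍ satisfy p * x = x * p and q * x = q * x * 1 = x * q for all x ∈ 𝒜, with ¬(p = 0 ∧ q = 0). Suppose there exists α : ℍ with α * p = p * α and α * q = q * α but α ∉ 𝒜. Let ℬ be the centralizer subalgebra {x : ℍ | x * p = p * x ∧ x * q = q * x} (a subalgebra of ℍ containing 𝒜). Then 𝒢_{p,q}[𝒜] is strictly contained in 𝒢_{p,q}[ℬ]: 𝒢_{p,q}[𝒜] ⊆ 𝒢_{p,q}[ℬ] and 𝒢_{p,q}[𝒜] ≠ 𝒢_{p,q}[ℬ]. (In particular, if {x : ℍ | x * p = p * x ∧ x * q = q * x} ≠ ↑𝒜, then 𝒢_{p,q}[𝒜] is not a maximal left algebra of quaternion Toeplitz matrices.) -/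

import Mathlib

/-- The family `𝒢_{p,q}[𝒜]` of quaternion Toeplitz matrices `A r s = a (r - s)`
with `a t ∈ 𝒜` for all `t` and `p * a (t - n) = q * a t` for `1 ≤ t ≤ n - 1`. -/
def Gpq (n : ℕ) (𝒜 : Subalgebra ℝ (Quaternion ℝ)) (p q : Quaternion ℝ) :
    Set (Matrix (Fin n) (Fin n) (Quaternion ℝ)) :=
  {A | ∃ a : ℤ → Quaternion ℝ,
    (∀ r s : Fin n, A r s = a ((r : ℤ) - (s : ℤ))) ∧
    (∀ t : ℤ, a t ∈ 𝒜) ∧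
    (∀ t : ℤ, 1 ≤ t → t ≤ (n : ℤ) - 1 → p * a (t - n) = q * a t)}

theorem Gpq_not_maximal_of_strict_centralizer (n : ℕ) (hn : 1 ≤ n)
    (𝒜 : Subalgebra ℝ (Quaternion ℝ)) (p q : Quaternion ℝ)
    (hp : ∀ x ∈ 𝒜, p * x = x * p) (hq : ∀ x ∈ 𝒜, q * x = x * q)
    (hpq : ¬ (p = 0 ∧ q = 0))
    (α : Quaternion ℝ) (hαp : α * p = p * α) (hαq : α * q = q * α)
    (hα𝒜 : α ∉ 𝒜)
    (ℬ : Subalgebra ℝ (Quaternion ℝ))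
    (hℬ : (ℬ : Set (Quaternion ℝ)) =
      {x : Quaternion ℝ | x * p = p * x ∧ x * q = q * x}) :
    Gpq n 𝒜 p q ⊆ Gpq n ℬ p q ∧ Gpq n 𝒜 p q ≠ Gpq n ℬ p q := by
  have hmemB : ∀ x : Quaternion ℝ, x * p = p * x → x * q = q * x → x ∈ ℬ := by
    intro x h1 h2
    have : x ∈ (ℬ : Set (Quaternion ℝ)) := by rw [hℬ]; exact ⟨h1, h2⟩
    exact this
  constructor
  · intro A ⟨a, h1, h2, h3⟩
    exact ⟨a, h1, fun t => hmemB _ (hp _ (h2 t)).symm (hq _ (h2 t)).symm, h3⟩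
  · -- witness: diagonal matrix with α
    set a : ℤ → Quaternion ℝ := fun t => if t = 0 then α else 0 with ha
    set A : Matrix (Fin n) (Fin n) (Quaternion ℝ) :=
      fun r s => a ((r : ℤ) - (s : ℤ)) with hA
    have hAB : A ∈ Gpq n ℬ p q := by
      refine ⟨a, fun r s => rfl, ?_, ?_⟩
      · intro t
        by_cases h : t = 0
        · simp [ha, h]; exact hmemB α hαp hαq
        · simp [ha, h]
      · intro t ht1 ht2
        have h1 : t - n ≠ 0 := by omega
        have h2 : t ≠ 0 := by omega
        simp [ha, h1, h2]
    intro heq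
    rw [← heq] at hAB
    obtain ⟨b, hb1, hb2, hb3⟩ := hAB
    have i0 : Fin n := ⟨0, hn⟩
    have := hb1 i0 i0
    have hb0 : b 0 = α := by
      have : A i0 i0 = b 0 := by simpa using hb1 i0 i0
      rw [← this]
      simp [hA, ha]
    exact hα𝒜 (hb0 ▸ hb2 0)
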